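/- The primal graph of any CNF-representation (without auxiliary variables) of the AtMostOne_n function is the complete graph on the n variables; in particular, its treewidth is n−1. -/

import Mathlib

/-- An assignment satisfies a clause if some literal evaluates to true. -/
def ClauseSat {n : ℕ} (a : Fin n → Bool) (C : Finset (Fin n × Bool)) : Prop :=
  ∃ l ∈ C, a l.1 = l.2

/-- A CNF-formula represents a Boolean function without auxiliary variables
if its models are exactly the accepting assignments. -/
def Represents {n : ℕ} (F : Finset (Finset (Fin n × Bool)))
    (f : (Fin n → Bool) → Prop) : Prop :=
  ∀ a, (∀ C ∈ F, ClauseSat a C) ↔ f a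

/-- The AtMostOne function: at most one variable is true. -/
def AtMostOne {n : ℕ} (a : Fin n → Bool) : Prop :=
  (Finset.univ.filter fun i => a i = true).card ≤ 1

/-- The primal graph of a CNF-formula: vertices are the variables, with an
edge between two distinct variables iff they occur together in some clause. -/
def primalGraph {n : ℕ} (F : Finset (Finset (Fin n × Bool))) :
    SimpleGraph (Fin n) where
  Adj u v := u ≠ v ∧ ∃ C ∈ F, (∃ b, (u, b) ∈ C) ∧ (∃ b, (v, b) ∈ C)
  symm := by
    constructor
    intro u v h
    exact ⟨h.1.symm, by obtain ⟨C, hC, hu, hv⟩ := h.2; exact ⟨C, hC, hv, hu⟩⟩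
  loopless := by constructor; intro u h; exact h.1 rfl

/-- A graph has treewidth at most `w` if it admits a tree decomposition of
width `w` (bags of size at most `w+1`, indexed by a tree, covering all
vertices and edges, with connected occurrence sets). -/
def TreewidthLE {V : Type} (G : SimpleGraph V) (w : ℕ) : Prop :=
  ∃ (ι : Type) (T : SimpleGraph ι) (B : ι → Finset V),
    T.Connected ∧ T.IsAcyclic ∧
    (∀ v, ∃ i, v ∈ B i) ∧
    (∀ u v, G.Adj u v → ∃ i, u ∈ B i ∧ v ∈ B i) ∧
    (∀ v, (T.induce {i | v ∈ B i}).Connected) ∧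
    (∀ i, (B i).card ≤ w + 1)


section TreeHelly

open SimpleGraph

variable {ι : Type} {T : SimpleGraph ι}

/-- A walk in an induced subgraph yields a walk in the ambient graph whose
support stays in the set. -/
lemma walk_down {S : Set ι} {u v : S} (p : (T.induce S).Walk u v) :
    ∃ q : T.Walk u v, ∀ x ∈ q.support, x ∈ S := by
  induction p with
  | nil => exact ⟨.nil, by simp⟩
  | @cons a b c h p ih =>
    obtain ⟨q, hq⟩ := ih
    refine ⟨.cons h q, ?_⟩
    intro x hx
    rcases List.mem_cons.mp hx with h1 | h2
    · exact h1 ▸ a.2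
    · exact hq x h2

/-- A walk in the ambient graph with support inside `S` yields reachability
in the induced subgraph. -/
lemma walk_up {S : Set ι} {u v : ι} (p : T.Walk u v) (hp : ∀ x ∈ p.support, x ∈ S) :
    (T.induce S).Reachable ⟨u, hp u p.start_mem_support⟩ ⟨v, hp v p.end_mem_support⟩ := by
  induction p with
  | nil => rfl
  | @cons a b c h p ih =>
    have hb : ∀ x ∈ p.support, x ∈ S := fun x hx => hp x (by simp [hx])
    exact (Reachable.refl _).trans
      ((SimpleGraph.Adj.reachable (by exact h : (T.induce S).Adj ⟨a, hp a (SimpleGraph.Walk.start_mem_support _)⟩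
        ⟨b, hb b p.start_mem_support⟩)).trans (ih hb))

/-- In a connected induced subgraph, any two members are joined by a path of the
ambient graph staying inside the set. -/
lemma path_in_set {S : Set ι} (hS : (T.induce S).Connected) {u v : ι}
    (hu : u ∈ S) (hv : v ∈ S) :
    ∃ p : T.Walk u v, p.IsPath ∧ ∀ x ∈ p.support, x ∈ S := by
  classical
  obtain ⟨w⟩ := hS.preconnected ⟨u, hu⟩ ⟨v, hv⟩
  obtain ⟨q, hq⟩ := walk_down w
  exact ⟨q.toPath, q.toPath.2, fun x hx => hq x (q.support_toPath_subset hx)⟩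

/-- Take the initial segment of a path up to the first vertex in `S2`. -/
lemma exists_first {S2 : Set ι} {y x : ι} (p : T.Walk y x) (hp : p.IsPath)
    (hx : x ∈ S2) :
    ∃ m, m ∈ S2 ∧ ∃ q : T.Walk y m, q.IsPath ∧ (∀ a ∈ q.support, a ∈ p.support) ∧
      (∀ a ∈ q.support, a ∈ S2 → a = m) := by
  classical
  induction p with
  | nil => exact ⟨_, hx, .nil, SimpleGraph.Walk.IsPath.nil, by simp, by simp⟩
  | @cons a b c h p ih =>
    by_cases ha : a ∈ S2
    · exact ⟨_, ha, .nil, SimpleGraph.Walk.IsPath.nil, by simp, by simp⟩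
    · obtain ⟨m, hm, q, hq, hsub, hfirst⟩ := ih hp.of_cons hx
      refine ⟨m, hm, .cons h q, ?_, ?_, ?_⟩
      · rw [SimpleGraph.Walk.cons_isPath_iff]
        exact ⟨hq, fun hmem => ((SimpleGraph.Walk.cons_isPath_iff _ _).mp hp).2
          (hsub a hmem)⟩
      · intro z hz
        rcases List.mem_cons.mp hz with h1 | h2
        · simp [h1]
        · simp [hsub z h2]
      · intro z hz hz2
        rcases List.mem_cons.mp hz with h1 | h2
        · exact absurd (h1 ▸ hz2) ha
        · exact hfirst z h2 hz2

/-- Helly property for three subtrees of a tree. -/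
lemma helly3 (hT : T.IsAcyclic) {S1 S2 S3 : Set ι}
    (h1 : (T.induce S1).Connected) (h2 : (T.induce S2).Connected)
    (h3 : (T.induce S3).Connected)
    {x y z : ι} (hx1 : x ∈ S1) (hx2 : x ∈ S2) (hy1 : y ∈ S1) (hy3 : y ∈ S3)
    (hz2 : z ∈ S2) (hz3 : z ∈ S3) :
    ∃ m, m ∈ S1 ∧ m ∈ S2 ∧ m ∈ S3 := by
  classical
  obtain ⟨p, hp, hpS⟩ := path_in_set h1 hy1 hx1
  obtain ⟨m, hm2, q, hq, hsub, hfirst⟩ := exists_first p hp hx2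
  have hm1 : m ∈ S1 := hpS m (hsub m q.end_mem_support)
  obtain ⟨r, hr, hrS⟩ := path_in_set h2 hm2 hz2
  have hqr : (q.append r).IsPath := by
    rw [SimpleGraph.Walk.isPath_def, SimpleGraph.Walk.support_append,
      List.nodup_append]
    have htail : r.support = m :: r.support.tail := r.support_eq_cons
    have hnodup := hr.support_nodup
    rw [htail, List.nodup_cons] at hnodup
    refine ⟨hq.support_nodup, hnodup.2, ?_⟩
    intro a haq b har hab
    rw [← hab] at har
    have haS2 : a ∈ S2 := hrS a (by rw [htail]; exact List.mem_cons_of_mem _ har)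
    exact absurd (hfirst a haq haS2 ▸ har) hnodup.1
  obtain ⟨s, hs, hsS⟩ := path_in_set h3 hy3 hz3
  have : q.append r = s := congrArg Subtype.val (hT.path_unique ⟨q.append r, hqr⟩ ⟨s, hs⟩)
  have hm3 : m ∈ S3 := by
    refine hsS m ?_
    rw [← this, SimpleGraph.Walk.support_append]
    exact List.mem_append_left _ q.end_mem_support
  exact ⟨m, hm1, hm2, hm3⟩

/-- The intersection of two subtrees of a tree is a subtree. -/
lemma inter_connected (hT : T.IsAcyclic) {S1 S2 : Set ι}
    (h1 : (T.induce S1).Connected) (h2 : (T.induce S2).Connected)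
    (hne : (S1 ∩ S2).Nonempty) : (T.induce (S1 ∩ S2)).Connected := by
  rw [SimpleGraph.connected_iff]
  obtain ⟨i0, hi0⟩ := hne
  refine ⟨?_, ⟨⟨i0, hi0⟩⟩⟩
  rintro ⟨u, hu1, hu2⟩ ⟨v, hv1, hv2⟩
  obtain ⟨p, hp, hpS⟩ := path_in_set h1 hu1 hv1
  obtain ⟨p', hp', hpS'⟩ := path_in_set h2 hu2 hv2
  have : p = p' := congrArg Subtype.val (hT.path_unique ⟨p, hp⟩ ⟨p', hp'⟩)
  exact walk_up p (fun x hx => Set.mem_inter (hpS x hx) (hpS' x (this ▸ hx)))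

/-- Helly property for finitely many subtrees of a tree. -/
lemma helly {n : ℕ} (hT : T.IsAcyclic) (I : Fin n → Set ι)
    (hconn : ∀ v, (T.induce (I v)).Connected)
    (hpair : ∀ v w, ∃ i, i ∈ I v ∧ i ∈ I w) (hn : 0 < n) :
    ∃ i, ∀ v, i ∈ I v := by
  classical
  have key : ∀ s : Finset (Fin n), ∃ S : Set ι, (T.induce S).Connected ∧
      (∀ v ∈ s, S ⊆ I v) ∧ ∀ w, ∃ i, i ∈ S ∧ i ∈ I w := by
    intro s
    induction s using Finset.induction with
    | empty =>
      exact ⟨I ⟨0, hn⟩, hconn _, by simp, fun w => hpair _ w⟩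
    | @insert a s ha ih =>
      obtain ⟨S, hS, hsub, hint⟩ := ih
      obtain ⟨i0, hi0S, hi0a⟩ := hint a
      refine ⟨S ∩ I a, inter_connected hT hS (hconn a) ⟨i0, hi0S, hi0a⟩, ?_, ?_⟩
      · intro v hv
        rcases Finset.mem_insert.mp hv with rfl | hv
        · exact Set.inter_subset_right
        · exact Set.inter_subset_left.trans (hsub v hv)
      · intro w
        obtain ⟨x, hxS, hxw⟩ := hint w
        obtain ⟨z, hza, hzw⟩ := hpair a w
        obtain ⟨m, hm1, hm2, hm3⟩ := helly3 hT hS (hconn a) (hconn w)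
          hi0S hi0a hxS hxw hza hzw
        exact ⟨m, ⟨hm1, hm2⟩, hm3⟩
  obtain ⟨S, _, hsub, hint⟩ := key Finset.univ
  obtain ⟨i, hiS, _⟩ := hint ⟨0, hn⟩
  exact ⟨i, fun v => hsub v (Finset.mem_univ v) hiS⟩


end TreeHelly

lemma part1 {n : ℕ} (F : Finset (Finset (Fin n × Bool)))
    (hF : Represents F AtMostOne) {u v : Fin n} (huv : u ≠ v) :
    ∃ C ∈ F, (∃ b, (u, b) ∈ C) ∧ (∃ b, (v, b) ∈ C) := by
  classical
  set a : Fin n → Bool := fun i => decide (i = u) || decide (i = v) with ha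
  have hnot : ¬ AtMostOne a := by
    unfold AtMostOne
    have hfil : (Finset.univ.filter fun i => a i = true) = {u, v} := by
      ext i; simp [ha]
    rw [hfil, Finset.card_insert_of_notMem (by simp [huv]), Finset.card_singleton]
    omega
  have hex : ¬ ∀ C ∈ F, ClauseSat a C := fun h => hnot ((hF a).mp h)
  push_neg at hex
  obtain ⟨C, hC, hC'⟩ := hex
  have key : ∀ w o : Fin n, w ≠ o → (∀ i, a i = (decide (i = w) || decide (i = o))) →
      ∃ b, (w, b) ∈ C := by
    intro w o hwo haeq
    by_contra hno
    push_neg at hno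
    set a' : Fin n → Bool := fun i => decide (i = o) with ha'
    have hAMO : AtMostOne a' := by
      unfold AtMostOne
      have : (Finset.univ.filter fun i => a' i = true) = {o} := by
        ext i; simp [ha']
      rw [this, Finset.card_singleton]
    obtain ⟨l, hlC, hl⟩ := (hF a').mpr hAMO C hC
    have hlw : l.1 ≠ w := by
      intro h
      exact hno l.2 (by rw [← h]; exact hlC)
    exact hC' ⟨l, hlC, by rw [haeq l.1, ← hl]; simp [ha', hlw]⟩
  exact ⟨C, hC, key u v huv (fun i => rfl),
    key v u huv.symm (fun i => by simp [ha, Bool.or_comm])⟩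

/-- The primal graph of any CNF-representation of AtMostOne is the complete
graph on the `n` variables; in particular its treewidth is exactly `n - 1`. -/
theorem stmt2 {n : ℕ} (F : Finset (Finset (Fin n × Bool)))
    (hF : Represents F AtMostOne) :
    primalGraph F = ⊤ ∧
    TreewidthLE (primalGraph F) (n - 1) ∧
    (∀ w, TreewidthLE (primalGraph F) w → n - 1 ≤ w) := by
  have hcomplete : primalGraph F = ⊤ := by
    ext u v
    simp only [SimpleGraph.top_adj]
    constructor
    · exact fun h => h.1
    · exact fun huv => ⟨huv, part1 F hF huv⟩
  refine ⟨hcomplete, ?_, ?_⟩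
  · refine ⟨Unit, ⊥, fun _ => Finset.univ, ?_, ?_, ?_, ?_, ?_, ?_⟩
    · rw [SimpleGraph.connected_iff]
      exact ⟨fun a b => by rw [Subsingleton.elim a b], ⟨()⟩⟩
    · intro v c hc
      cases c with
      | nil => exact hc.ne_nil rfl
      | cons h _ => exact h.elim
    · exact fun v => ⟨(), Finset.mem_univ v⟩
    · exact fun u v _ => ⟨(), Finset.mem_univ u, Finset.mem_univ v⟩
    · intro v
      rw [SimpleGraph.connected_iff]
      exact ⟨fun a b => by rw [Subsingleton.elim a b], ⟨⟨(), Finset.mem_univ v⟩⟩⟩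
    · intro i
      simp only [Finset.card_univ, Fintype.card_fin]
      omega
  · rintro w ⟨ι, T, B, hTc, hTa, hcover, hedge, hocc, hcard⟩
    rcases Nat.eq_zero_or_pos n with rfl | hn
    · simp
    · have hpair : ∀ v u : Fin n, ∃ j, j ∈ {j | v ∈ B j} ∧ j ∈ {j | u ∈ B j} := by
        intro v u
        by_cases hvu : v = u
        · subst hvu
          obtain ⟨j, hj⟩ := hcover v
          exact ⟨j, hj, hj⟩
        · have : (primalGraph F).Adj v u := by
            rw [hcomplete]; exact hvu
          exact hedge v u this
      obtain ⟨i, hi⟩ := helly hTa (fun v => {j | v ∈ B j}) hocc hpair hn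
      have hsub : (Finset.univ : Finset (Fin n)) ⊆ B i := fun v _ => hi v
      have h1 : (Finset.univ : Finset (Fin n)).card ≤ (B i).card :=
        Finset.card_le_card hsub
      have h2 : (Finset.univ : Finset (Fin n)).card = n := by simp
      have := hcard i
      omega
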